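/- In the quasipolynomial algebra \bar{J}^0_q(n), set X(1) = x_{1,1}x_{2,2}⋯x_{n,n} and, for j = 2,…,n, X(j) = x_{1,j}x_{2,j+1}⋯x_{n-j+1,n}·x_{n-j+1,1}x_{n-j+2,2}⋯x_{n,j}. Then for all s,t ∈ {1,…,n}: x_{s,t}X(1) = q^{(n-2)(n+1-s-t)} X(1) x_{s,t}, and x_{s,t}X(j) = q^{(n-1)(n+1-s-t)} X(j) x_{s,t} for every j = 2,…,n. Consequently, if q is a primitive m-th root of unity and r is the smallest positive integer with rm-n+1 ≥ 0, then the elements X(j)·x_{1,n}^{rm-n+1} for j = 2,…,n and X(1)·x_{1,n}^{rm-n+2} are central in \bar{J}^0_q(n). -/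

import Mathlib

noncomputable section

/-- The defining relations of the quasipolynomial algebra `\bar J^0_q(n)`:
`x_{i,j} x_{s,t} = q^{s+t-i-j} x_{s,t} x_{i,j}` whenever `(s-i)(t-j) ≤ 0`, and
`x_{i,j} x_{s,t} = q^{s+t-i-j-2} x_{s,t} x_{i,j}` whenever `s > i` and `t > j`.
(Indices here are 0-based; all index differences agree with the 1-based ones.) -/
inductive QRel (n : ℕ) (q : ℂ) :
    FreeAlgebra ℂ (Fin n × Fin n) → FreeAlgebra ℂ (Fin n × Fin n) → Prop
  | comm (i j s t : Fin n)
      (h : (((s : ℕ) : ℤ) - ((i : ℕ) : ℤ)) * (((t : ℕ) : ℤ) - ((j : ℕ) : ℤ)) ≤ 0) :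
      QRel n q (FreeAlgebra.ι ℂ (i, j) * FreeAlgebra.ι ℂ (s, t))
        (q ^ (((s : ℕ) : ℤ) + ((t : ℕ) : ℤ) - ((i : ℕ) : ℤ) - ((j : ℕ) : ℤ)) •
          (FreeAlgebra.ι ℂ (s, t) * FreeAlgebra.ι ℂ (i, j)))
  | cross (i j s t : Fin n) (hs : i < s) (ht : j < t) :
      QRel n q (FreeAlgebra.ι ℂ (i, j) * FreeAlgebra.ι ℂ (s, t))
        (q ^ (((s : ℕ) : ℤ) + ((t : ℕ) : ℤ) - ((i : ℕ) : ℤ) - ((j : ℕ) : ℤ) - 2) •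
          (FreeAlgebra.ι ℂ (s, t) * FreeAlgebra.ι ℂ (i, j)))

/-- The quasipolynomial algebra `\bar J^0_q(n)`. -/
abbrev QAlg (n : ℕ) (q : ℂ) := RingQuot (QRel n q)

/-- The generator `x_{i,j}` (0-based indices). -/
def qgen (n : ℕ) (q : ℂ) (i j : Fin n) : QAlg n q :=
  RingQuot.mkAlgHom ℂ (QRel n q) (FreeAlgebra.ι ℂ (i, j))

/-- The generator `x_{i,j}` with `ℕ` (0-based) indices; junk value `1` out of range. -/
def qgen' (n : ℕ) (q : ℂ) (i j : ℕ) : QAlg n q :=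
  if h : i < n ∧ j < n then qgen n q ⟨i, h.1⟩ ⟨j, h.2⟩ else 1

/-- `X(j)` (for the 1-based index `j`): `X(1) = x_{1,1} x_{2,2} ⋯ x_{n,n}` and, for `j ≥ 2`,
`X(j) = x_{1,j} x_{2,j+1} ⋯ x_{n-j+1,n} ⋅ x_{n-j+1,1} x_{n-j+2,2} ⋯ x_{n,j}`. -/
def XX (n : ℕ) (q : ℂ) (j : ℕ) : QAlg n q :=
  if j = 1 then ((List.range n).map fun k => qgen' n q k k).prod
  else ((List.range (n - j + 1)).map fun k => qgen' n q k (j - 1 + k)).prod *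
    ((List.range j).map fun k => qgen' n q (n - j + k) k).prod

/-- commutation exponent -/
def Eexp (s t i j : ℤ) : ℤ :=
  i + j - s - t - (if s < i ∧ t < j then 2 else 0) + (if i < s ∧ j < t then 2 else 0)

lemma smul_cancel {A : Type*} [AddCommMonoid A] [Module ℂ A] (q : ℂ) (hq : q ≠ 0)
    (e f : ℤ) (h : e + f = 0) (a : A) : a = q ^ e • q ^ f • a := by
  rw [smul_smul, ← zpow_add₀ hq, h, zpow_zero, one_smul]

lemma swap (n : ℕ) (q : ℂ) (hq : q ≠ 0) (s t i j : Fin n) :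
    qgen n q s t * qgen n q i j =
      q ^ Eexp (s:ℕ) (t:ℕ) (i:ℕ) (j:ℕ) • (qgen n q i j * qgen n q s t) := by
  unfold qgen Eexp
  by_cases h1 : (s:ℕ) < (i:ℕ) ∧ (t:ℕ) < (j:ℕ)
  · have := RingQuot.mkAlgHom_rel ℂ (QRel.cross (q := q) s t i j
      (by exact_mod_cast h1.1) (by exact_mod_cast h1.2))
    simp only [map_mul, map_smul] at this
    rw [this]
    have h2 : ¬(((i:ℕ):ℤ) < (s:ℕ) ∧ ((j:ℕ):ℤ) < (t:ℕ)) := by push_cast; omega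
    rw [if_pos (by exact_mod_cast h1), if_neg h2]
    ring_nf
  · by_cases h2 : (i:ℕ) < (s:ℕ) ∧ (j:ℕ) < (t:ℕ)
    · have := RingQuot.mkAlgHom_rel ℂ (QRel.cross (q := q) i j s t
        (by exact_mod_cast h2.1) (by exact_mod_cast h2.2))
      simp only [map_mul, map_smul] at this
      rw [this]
      refine smul_cancel q hq _ _ ?_ _
      rw [if_neg (by push_cast at h1 ⊢; omega), if_pos (by exact_mod_cast h2)]
      ring
    · have hle : (((i:ℕ):ℤ) - ((s:ℕ):ℤ)) * (((j:ℕ):ℤ) - ((t:ℕ):ℤ)) ≤ 0 := by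
        rw [mul_nonpos_iff]; push_cast at h1 h2; omega
      have := RingQuot.mkAlgHom_rel ℂ (QRel.comm (q := q) s t i j hle)
      simp only [map_mul, map_smul] at this
      rw [this, if_neg (by push_cast at h1 ⊢; omega), if_neg (by push_cast at h2 ⊢; omega)]
      ring_nf

lemma swap' (n : ℕ) (q : ℂ) (hq : q ≠ 0) (s t i j : ℕ)
    (hs : s < n) (ht : t < n) (hi : i < n) (hj : j < n) :
    qgen' n q s t * qgen' n q i j =
      q ^ Eexp s t i j • (qgen' n q i j * qgen' n q s t) := by
  unfold qgen'
  rw [dif_pos ⟨hs, ht⟩, dif_pos ⟨hi, hj⟩]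
  exact swap n q hq ⟨s, hs⟩ ⟨t, ht⟩ ⟨i, hi⟩ ⟨j, hj⟩

lemma list_comm (n : ℕ) (q : ℂ) (hq : q ≠ 0) (s t : ℕ) (hs : s < n) (ht : t < n) :
    ∀ (L : List (ℕ × ℕ)), (∀ p ∈ L, p.1 < n ∧ p.2 < n) →
    qgen' n q s t * (L.map fun p => qgen' n q p.1 p.2).prod =
      q ^ ((L.map fun p => Eexp s t p.1 p.2).sum) •
        ((L.map fun p => qgen' n q p.1 p.2).prod * qgen' n q s t)
  | [], _ => by simp
  | p :: L, h => by
    have hp := h p List.mem_cons_self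
    have hL := list_comm n q hq s t hs ht L (fun x hx => h x (List.mem_cons_of_mem _ hx))
    simp only [List.map_cons, List.prod_cons, List.sum_cons]
    rw [← mul_assoc, swap' n q hq s t p.1 p.2 hs ht hp.1 hp.2, smul_mul_assoc, mul_assoc,
      hL, mul_smul_comm, smul_smul, ← zpow_add₀ hq, mul_assoc]

lemma master (s t α β : ℤ) : ∀ (m : ℕ),
    ((List.range m).map fun k : ℕ => Eexp s t (α + (k:ℤ)) (β + (k:ℤ))).sum =
      (m:ℤ) * (α + β - s - t) + (m:ℤ) * ((m:ℤ) - 1)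
        - 2 * (max 0 (min (m:ℤ) ((m:ℤ) - 1 - max (s - α) (t - β))))
        + 2 * (max 0 (min (m:ℤ) (min (s - α) (t - β))))
  | 0 => by simp
  | (m+1) => by
    rw [List.range_succ, List.map_append, List.sum_append, master s t α β m]
    simp only [List.map_cons, List.map_nil, List.sum_cons, List.sum_nil, add_zero]
    unfold Eexp
    push_cast
    have h1 : ((m:ℤ)+1) * (α+β-s-t) = (m:ℤ)*(α+β-s-t) + (α+β-s-t) := by ring
    have h2 : ((m:ℤ)+1) * ((m:ℤ)+1-1) = (m:ℤ)*((m:ℤ)-1) + 2*(m:ℤ) := by ring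
    rw [h1, h2]
    generalize (m:ℤ)*(α+β-s-t) = P
    generalize (m:ℤ)*((m:ℤ)-1) = Q
    split_ifs <;> omega

lemma sumX1 (n : ℕ) (s t : ℤ) (hs0 : 0 ≤ s) (hsn : s < n) (ht0 : 0 ≤ t) (htn : t < n) :
    ((List.range n).map fun k : ℕ => Eexp s t (k:ℤ) (k:ℤ)).sum = ((n:ℤ)-2) * ((n:ℤ)-1-s-t) := by
  have hf : (fun k : ℕ => Eexp s t (k:ℤ) (k:ℤ))
      = fun k : ℕ => Eexp s t (0 + (k:ℤ)) (0 + (k:ℤ)) := by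
    funext k; rw [zero_add]
  rw [hf, master s t 0 0 n]
  have hA : max 0 (min (n:ℤ) ((n:ℤ) - 1 - max (s - 0) (t - 0))) = (n:ℤ) - 1 - max s t := by omega
  have hB : max 0 (min (n:ℤ) (min (s - 0) (t - 0))) = min s t := by omega
  rw [hA, hB]
  rcases le_total s t with h | h
  · rw [max_eq_right h, min_eq_left h]; ring
  · rw [max_eq_left h, min_eq_right h]; ring

lemma sumXj (n j : ℕ) (hj2 : 2 ≤ j) (hjn : j ≤ n) (s t : ℤ)
    (hs0 : 0 ≤ s) (hsn : s < n) (ht0 : 0 ≤ t) (htn : t < n) :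
    ((List.range (n - j + 1)).map fun k : ℕ => Eexp s t (k:ℤ) (((j - 1 + k : ℕ)):ℤ)).sum
      + ((List.range j).map fun k : ℕ => Eexp s t (((n - j + k : ℕ)):ℤ) (k:ℤ)).sum
      = ((n:ℤ)-1) * ((n:ℤ)-1-s-t) := by
  have hf1 : (fun k : ℕ => Eexp s t (k:ℤ) (((j - 1 + k : ℕ)):ℤ))
      = fun k : ℕ => Eexp s t (0 + (k:ℤ)) (((j:ℤ) - 1) + (k:ℤ)) := by
    funext k
    have e1 : ((j - 1 + k : ℕ) : ℤ) = ((j:ℤ) - 1) + (k:ℤ) := by omega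
    rw [e1, zero_add]
  have hf2 : (fun k : ℕ => Eexp s t (((n - j + k : ℕ)):ℤ) (k:ℤ))
      = fun k : ℕ => Eexp s t (((n:ℤ) - (j:ℤ)) + (k:ℤ)) (0 + (k:ℤ)) := by
    funext k
    have e1 : ((n - j + k : ℕ) : ℤ) = ((n:ℤ) - (j:ℤ)) + (k:ℤ) := by omega
    rw [e1, zero_add]
  rw [hf1, hf2, master s t 0 ((j:ℤ)-1) (n - j + 1), master s t ((n:ℤ)-(j:ℤ)) 0 j]
  have hm1 : ((n - j + 1 : ℕ) : ℤ) = (n:ℤ) - (j:ℤ) + 1 := by omega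
  rw [hm1]
  have hc : max 0 (min ((n:ℤ)-(j:ℤ)+1) ((n:ℤ)-(j:ℤ)+1 - 1 - max (s - 0) (t - ((j:ℤ)-1))))
          + max 0 (min (j:ℤ) ((j:ℤ) - 1 - max (s - ((n:ℤ)-(j:ℤ))) (t - 0)))
          - max 0 (min ((n:ℤ)-(j:ℤ)+1) (min (s - 0) (t - ((j:ℤ)-1))))
          - max 0 (min (j:ℤ) (min (s - ((n:ℤ)-(j:ℤ))) (t - 0)))
          = (n:ℤ) - 1 - s - t := by omega
  linear_combination (-2 : ℤ) * hc

lemma qgen_eq (n : ℕ) (q : ℂ) (s t : Fin n) : qgen n q s t = qgen' n q (s:ℕ) (t:ℕ) := by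
  unfold qgen'
  rw [dif_pos ⟨s.isLt, t.isLt⟩]

lemma part1 (n : ℕ) (q : ℂ) (hq : q ≠ 0) (s t : Fin n) :
    qgen n q s t * XX n q 1 =
      q ^ (((n : ℤ) - 2) * ((n : ℤ) - 1 - ((s : ℕ) : ℤ) - ((t : ℕ) : ℤ))) •
        (XX n q 1 * qgen n q s t) := by
  have hL : ((List.range n).map fun k => qgen' n q k k)
      = (((List.range n).map fun k => (k, k)).map fun p => qgen' n q p.1 p.2) := by
    rw [List.map_map]; rfl
  have hmem : ∀ p ∈ (List.range n).map fun k => (k, k), p.1 < n ∧ p.2 < n := by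
    intro p hp
    simp only [List.mem_map, List.mem_range] at hp
    obtain ⟨k, hk, rfl⟩ := hp
    exact ⟨hk, hk⟩
  rw [XX, if_pos rfl, qgen_eq, hL,
    list_comm n q hq (s:ℕ) (t:ℕ) s.isLt t.isLt _ hmem, List.map_map]
  have hfun : ((fun p : ℕ × ℕ => Eexp (s:ℕ) (t:ℕ) p.1 p.2) ∘ fun k => (k, k))
      = fun k : ℕ => Eexp (s:ℕ) (t:ℕ) (k:ℤ) (k:ℤ) := rfl
  rw [hfun, sumX1 n (s:ℕ) (t:ℕ) (by positivity) (by exact_mod_cast s.isLt)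
    (by positivity) (by exact_mod_cast t.isLt)]

lemma part2 (n : ℕ) (q : ℂ) (hq : q ≠ 0) (j : ℕ) (hj2 : 2 ≤ j) (hjn : j ≤ n) (s t : Fin n) :
    qgen n q s t * XX n q j =
      q ^ (((n : ℤ) - 1) * ((n : ℤ) - 1 - ((s : ℕ) : ℤ) - ((t : ℕ) : ℤ))) •
        (XX n q j * qgen n q s t) := by
  set L : List (ℕ × ℕ) :=
    ((List.range (n - j + 1)).map fun k => (k, j - 1 + k)) ++
      ((List.range j).map fun k => (n - j + k, k)) with hLdef
  have hXX : XX n q j = (L.map fun p => qgen' n q p.1 p.2).prod := by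
    rw [XX, if_neg (by omega), hLdef, List.map_append, List.prod_append,
      List.map_map, List.map_map]
    rfl
  have hmem : ∀ p ∈ L, p.1 < n ∧ p.2 < n := by
    intro p hp
    rw [hLdef] at hp
    simp only [List.mem_append, List.mem_map, List.mem_range] at hp
    rcases hp with ⟨k, hk, rfl⟩ | ⟨k, hk, rfl⟩ <;> constructor <;> simp <;> omega
  rw [hXX, qgen_eq, list_comm n q hq (s:ℕ) (t:ℕ) s.isLt t.isLt _ hmem]
  congr 2
  rw [hLdef, List.map_append, List.sum_append, List.map_map, List.map_map]
  have hfun1 : ((fun p : ℕ × ℕ => Eexp (s:ℕ) (t:ℕ) p.1 p.2) ∘ fun k => (k, j - 1 + k))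
      = fun k : ℕ => Eexp (s:ℕ) (t:ℕ) (k:ℤ) (((j - 1 + k : ℕ)):ℤ) := rfl
  have hfun2 : ((fun p : ℕ × ℕ => Eexp (s:ℕ) (t:ℕ) p.1 p.2) ∘ fun k => (n - j + k, k))
      = fun k : ℕ => Eexp (s:ℕ) (t:ℕ) (((n - j + k : ℕ)):ℤ) (k:ℤ) := rfl
  rw [hfun1, hfun2, sumXj n j hj2 hjn (s:ℕ) (t:ℕ) (by positivity)
    (by exact_mod_cast s.isLt) (by positivity) (by exact_mod_cast t.isLt)]

lemma central_of_comm (n : ℕ) (q : ℂ) (a : QAlg n q)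
    (h : ∀ i j : Fin n, qgen n q i j * a = a * qgen n q i j) :
    a ∈ Subalgebra.center ℂ (QAlg n q) := by
  rw [Subalgebra.mem_center_iff]
  intro b
  obtain ⟨c, rfl⟩ := RingQuot.mkAlgHom_surjective ℂ (QRel n q) b
  refine FreeAlgebra.induction ℂ (Fin n × Fin n)
    (motive := fun x => (RingQuot.mkAlgHom ℂ (QRel n q)) x * a = a * (RingQuot.mkAlgHom ℂ (QRel n q)) x)
    ?_ ?_ ?_ ?_ c
  · intro r
    rw [AlgHom.commutes]
    exact Algebra.commutes r a
  · intro x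
    simpa [qgen] using h x.1 x.2
  · intro x y hx hy
    rw [map_mul, mul_assoc, hy, ← mul_assoc, hx, mul_assoc]
  · intro x y hx hy
    rw [map_add, add_mul, hx, hy, mul_add]

lemma gen_pow (n : ℕ) (q : ℂ) (hq : q ≠ 0) (s t : Fin n) : ∀ e : ℕ,
    qgen n q s t * (qgen' n q 0 (n - 1)) ^ e =
      q ^ ((e:ℤ) * ((n:ℤ) - 1 - ((s:ℕ):ℤ) - ((t:ℕ):ℤ))) •
        ((qgen' n q 0 (n - 1)) ^ e * qgen n q s t)
  | 0 => by simp
  | (e+1) => by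
    have hn : 0 < n := s.pos
    have hs := s.isLt
    have ht := t.isLt
    have hE : Eexp ((s:ℕ):ℤ) ((t:ℕ):ℤ) (((0:ℕ)):ℤ) (((n - 1 : ℕ)):ℤ)
        = (n:ℤ) - 1 - ((s:ℕ):ℤ) - ((t:ℕ):ℤ) := by
      unfold Eexp
      rw [if_neg (by omega), if_neg (by omega)]
      omega
    rw [pow_succ, ← mul_assoc, gen_pow n q hq s t e, smul_mul_assoc, mul_assoc,
      qgen_eq, swap' n q hq (s:ℕ) (t:ℕ) 0 (n-1) s.isLt t.isLt hn (by omega), hE,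
      mul_smul_comm, smul_smul, ← zpow_add₀ hq, ← mul_assoc, ← qgen_eq]
    congr 1
    push_cast
    ring

lemma q_pow_one (q : ℂ) (m : ℕ) (hm : IsPrimitiveRoot q m) (z : ℤ) :
    q ^ ((m:ℤ) * z) = 1 := by
  rw [zpow_mul, zpow_natCast, hm.pow_eq_one, one_zpow]

theorem stmt3 (n : ℕ) (q : ℂ) (hq : q ≠ 0) :
    (∀ s t : Fin n,
        qgen n q s t * XX n q 1 =
          q ^ (((n : ℤ) - 2) * ((n : ℤ) - 1 - ((s : ℕ) : ℤ) - ((t : ℕ) : ℤ))) •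
            (XX n q 1 * qgen n q s t)) ∧
    (∀ j : ℕ, 2 ≤ j → j ≤ n → ∀ s t : Fin n,
        qgen n q s t * XX n q j =
          q ^ (((n : ℤ) - 1) * ((n : ℤ) - 1 - ((s : ℕ) : ℤ) - ((t : ℕ) : ℤ))) •
            (XX n q j * qgen n q s t)) ∧
    (∀ m : ℕ, 0 < m → IsPrimitiveRoot q m →
      ∀ r : ℕ, 0 < r → n ≤ r * m + 1 → (∀ r' : ℕ, 0 < r' → n ≤ r' * m + 1 → r ≤ r') →
        (∀ j : ℕ, 2 ≤ j → j ≤ n →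
            XX n q j * qgen' n q 0 (n - 1) ^ (r * m + 1 - n) ∈
              Subalgebra.center ℂ (QAlg n q)) ∧
          XX n q 1 * qgen' n q 0 (n - 1) ^ (r * m + 2 - n) ∈
            Subalgebra.center ℂ (QAlg n q)) := by
  refine ⟨fun s t => part1 n q hq s t, fun j hj2 hjn s t => part2 n q hq j hj2 hjn s t, ?_⟩
  intro m hm hprim r hr hn _hmin
  constructor
  · intro j hj2 hjn
    apply central_of_comm
    intro a b
    rw [← mul_assoc, part2 n q hq j hj2 hjn a b, smul_mul_assoc, mul_assoc,
      gen_pow n q hq a b (r * m + 1 - n), mul_smul_comm, smul_smul, ← zpow_add₀ hq,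
      ← mul_assoc]
    have hX : ((n:ℤ) - 1) * ((n:ℤ) - 1 - ((a:ℕ):ℤ) - ((b:ℕ):ℤ))
        + ((r * m + 1 - n : ℕ):ℤ) * ((n:ℤ) - 1 - ((a:ℕ):ℤ) - ((b:ℕ):ℤ))
        = (m:ℤ) * ((r:ℤ) * ((n:ℤ) - 1 - ((a:ℕ):ℤ) - ((b:ℕ):ℤ))) := by
      have he' : ((r * m + 1 - n : ℕ):ℤ) = (r:ℤ) * (m:ℤ) + 1 - (n:ℤ) := by
        rw [Nat.cast_sub hn]; push_cast; ring
      rw [he']; ring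
    rw [hX, q_pow_one q m hprim, one_smul]
  · apply central_of_comm
    intro a b
    rw [← mul_assoc, part1 n q hq a b, smul_mul_assoc, mul_assoc,
      gen_pow n q hq a b (r * m + 2 - n), mul_smul_comm, smul_smul, ← zpow_add₀ hq,
      ← mul_assoc]
    have hX : ((n:ℤ) - 2) * ((n:ℤ) - 1 - ((a:ℕ):ℤ) - ((b:ℕ):ℤ))
        + ((r * m + 2 - n : ℕ):ℤ) * ((n:ℤ) - 1 - ((a:ℕ):ℤ) - ((b:ℕ):ℤ))
        = (m:ℤ) * ((r:ℤ) * ((n:ℤ) - 1 - ((a:ℕ):ℤ) - ((b:ℕ):ℤ))) := by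
      have he' : ((r * m + 2 - n : ℕ):ℤ) = (r:ℤ) * (m:ℤ) + 2 - (n:ℤ) := by
        rw [Nat.cast_sub (by omega)]; push_cast; ring
      rw [he']; ring
    rw [hX, q_pow_one q m hprim, one_smul]
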